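/- Fix K ∈ ℝⁿ. There exist constants m₂ > 0, μ₂ ∈ (|K|/√(1+|K|²), 1) and c > 0 such that for all ξ ∈ ℝⁿ with |ξ| ≤ μ₂ and |K·ξ| ≤ m₂, both roots A_±(K,ξ) of (1+|K|²)X² − 2(1+iK·ξ)X + (1−|ξ|²) (with the square-root branch of nonnegative real part) satisfy Re A_±(K,ξ) > 1/(2(1+|K|²)). -/

import Mathlib

/- STATEMENT 4: on a suitable low-frequency region `|ξ| ≤ μ₂`, `|K·ξ| ≤ m₂`, both
roots `A_±(K,ξ)` (square-root branch with nonnegative real part) satisfy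
`Re A_±(K,ξ) > 1/(2(1+|K|²))`. -/

open Complex
open scoped InnerProductSpace

theorem stmt_4 (n : ℕ) (K : EuclideanSpace ℝ (Fin n)) :
    ∃ m₂ : ℝ, 0 < m₂ ∧ ∃ μ₂ : ℝ,
      ‖K‖ / Real.sqrt (1 + ‖K‖ ^ 2) < μ₂ ∧ μ₂ < 1 ∧ ∃ c : ℝ, 0 < c ∧
      ∀ ξ : EuclideanSpace ℝ (Fin n), ‖ξ‖ ≤ μ₂ → |(⟪K, ξ⟫_ℝ : ℝ)| ≤ m₂ →
        ∀ s : ℂ,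
          s ^ 2 = (1 + Complex.I * (⟪K, ξ⟫_ℝ : ℂ)) ^ 2
              - (1 + (‖K‖ : ℂ) ^ 2) * (1 - (‖ξ‖ : ℂ) ^ 2) →
          0 ≤ s.re →
          1 / (2 * (1 + ‖K‖ ^ 2)) <
              (((1 + Complex.I * (⟪K, ξ⟫_ℝ : ℂ) + s) / (1 + (‖K‖ : ℂ) ^ 2)).re) ∧
          1 / (2 * (1 + ‖K‖ ^ 2)) <
              (((1 + Complex.I * (⟪K, ξ⟫_ℝ : ℂ) - s) / (1 + (‖K‖ : ℂ) ^ 2)).re) := by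
  have hR0 : (0:ℝ) ≤ ‖K‖ := norm_nonneg K
  set R : ℝ := ‖K‖ with hRdef
  have hden : (0:ℝ) < 1 + R ^ 2 := by positivity
  refine ⟨1/16, by norm_num, Real.sqrt ((R^2 + 1/16)/(1 + R^2)), ?_, ?_, 1, one_pos, ?_⟩
  · have h1 : R / Real.sqrt (1 + R ^ 2) = Real.sqrt (R^2 / (1 + R^2)) := by
      rw [Real.sqrt_div (by positivity), Real.sqrt_sq hR0]
    rw [h1]
    apply Real.sqrt_lt_sqrt (by positivity)
    rw [div_lt_div_iff_of_pos_right hden]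
    linarith
  · rw [Real.sqrt_lt' one_pos, one_pow, div_lt_one hden]
    linarith
  · intro ξ hξ hk s hsq hs
    set k : ℝ := ⟪K, ξ⟫_ℝ with hkdef
    set t : ℝ := ‖ξ‖ with htdef
    set E : ℝ := 1 - k^2 - (1 + R^2)*(1 - t^2) with hEdef
    have hrhs : (1 + Complex.I * (k:ℂ)) ^ 2 - (1 + (R:ℂ)^2) * (1 - (t:ℂ)^2)
        = (E : ℂ) + Complex.I * ((2*k : ℝ) : ℂ) := by
      rw [hEdef]; push_cast; ring_nf; simp [Complex.I_sq]; ring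
    rw [hrhs] at hsq
    have hre : s.re^2 - s.im^2 = E := by
      have := congrArg Complex.re hsq
      simpa [sq, Complex.mul_re, Complex.mul_im] using this
    have him : s.re * s.im = k := by
      have := congrArg Complex.im hsq
      simp [sq, Complex.mul_re, Complex.mul_im] at this
      linarith
    have ht0 : 0 ≤ t := norm_nonneg ξ
    have ht2 : t^2 ≤ (R^2 + 1/16)/(1 + R^2) := by
      have := Real.sq_sqrt (show (0:ℝ) ≤ (R^2 + 1/16)/(1 + R^2) by positivity)
      nlinarith [hξ, ht0, Real.sqrt_nonneg ((R^2 + 1/16)/(1 + R^2))]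
    have hE : E ≤ 1/16 := by
      have h2 : (1 + R^2) * t^2 ≤ R^2 + 1/16 := by
        have := (le_div_iff₀ hden).mp ht2
        nlinarith
      nlinarith [sq_nonneg k]
    have hk2 : k^2 ≤ 1/256 := by
      nlinarith [_root_.sq_abs k, abs_nonneg k, hk]
    have hx : s.re < 1/2 := by
      by_contra hx'
      push_neg at hx'
      have hx2 : 1/4 ≤ s.re^2 := by nlinarith
      have hy2 : 3/16 ≤ s.im^2 := by linarith
      have hksq : s.re^2 * s.im^2 = k^2 := by rw [← him]; ring
      have hprod := mul_le_mul hx2 hy2 (by norm_num : (0:ℝ) ≤ 3/16) (sq_nonneg s.re)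
      linarith
    clear_value k t
    clear hrhs hsq hre him hE hk2 ht2 hk hξ hEdef htdef hkdef
    have hcast : (1 + (R:ℂ)^2) = ((1 + R^2 : ℝ) : ℂ) := by push_cast; ring
    rw [hcast]
    constructor
    · rw [Complex.div_ofReal_re]
      have : (1 + Complex.I * (k:ℂ) + s).re = 1 + s.re := by simp
      rw [this]
      rw [div_lt_div_iff₀ (by positivity) hden]
      nlinarith [mul_nonneg hs hden.le]
    · rw [Complex.div_ofReal_re]
      have : (1 + Complex.I * (k:ℂ) - s).re = 1 - s.re := by simp
      rw [this]
      rw [div_lt_div_iff₀ (by positivity) hden]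
      nlinarith [mul_nonneg hs hden.le]
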